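/- The soft rank energy sRE(ε) converges to the rank energy RE as ε → 0⁺, provided the unregularized discrete OT problem between the joint empirical measure and the target measure has a unique optimal plan (a permutation). -/
import Mathlib


open Finset Filter Topology

/-- The transportation polytope with uniform marginals `1/N`. -/
def transportPolytope (N : ℕ) : Set (Matrix (Fin N) (Fin N) ℝ) :=
  {P | (∀ i j, 0 ≤ P i j) ∧
    (∀ i, ∑ j, P i j = 1 / (N : ℝ)) ∧
    (∀ j, ∑ i, P i j = 1 / (N : ℝ))}

/-- Entropy of a nonnegative matrix (with `0 log 0 = 0`, as `Real.log 0 = 0`). -/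
noncomputable def matrixEntropy {N : ℕ} (P : Matrix (Fin N) (Fin N) ℝ) : ℝ :=
  -∑ i, ∑ j, P i j * Real.log (P i j)

/-- Soft ranks computed from a (row-normalized) plan `P` and target points `h`. -/
noncomputable def softRanks {N d : ℕ} (P : Matrix (Fin N) (Fin N) ℝ)
    (h : Fin N → EuclideanSpace ℝ (Fin d)) : Fin N → EuclideanSpace ℝ (Fin d) :=
  fun i => ∑ j, (P i j / ∑ k, P i k) • h j

/-- The two-sample energy statistic. -/
noncomputable def energyStat {d m n : ℕ} (a : Fin m → EuclideanSpace ℝ (Fin d))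
    (b : Fin n → EuclideanSpace ℝ (Fin d)) : ℝ :=
  (2 / ((m : ℝ) * n)) * ∑ i, ∑ j, ‖a i - b j‖
    - (1 / (m : ℝ) ^ 2) * ∑ i, ∑ j, ‖a i - a j‖
    - (1 / (n : ℝ) ^ 2) * ∑ i, ∑ j, ‖b i - b j‖

/- ### Auxiliary lemmas -/

lemma continuous_elem' {N : ℕ} (i j : Fin N) :
    Continuous fun Q : Matrix (Fin N) (Fin N) ℝ => Q i j :=
  continuous_id.matrix_elem i j

lemma transportPolytope_isClosed (N : ℕ) : IsClosed (transportPolytope N) := by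
  have h1 : IsClosed {P : Matrix (Fin N) (Fin N) ℝ | ∀ i j, 0 ≤ P i j} := by
    simp only [Set.setOf_forall]
    exact isClosed_iInter fun i => isClosed_iInter fun j =>
      isClosed_le continuous_const (continuous_elem' i j)
  have h2 : IsClosed {P : Matrix (Fin N) (Fin N) ℝ | ∀ i, ∑ j, P i j = 1 / (N : ℝ)} := by
    simp only [Set.setOf_forall]
    exact isClosed_iInter fun i => isClosed_eq
      (continuous_finset_sum _ fun j _ => continuous_elem' i j) continuous_const
  have h3 : IsClosed {P : Matrix (Fin N) (Fin N) ℝ | ∀ j, ∑ i, P i j = 1 / (N : ℝ)} := by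
    simp only [Set.setOf_forall]
    exact isClosed_iInter fun j => isClosed_eq
      (continuous_finset_sum _ fun i _ => continuous_elem' i j) continuous_const
  have : transportPolytope N =
      {P : Matrix (Fin N) (Fin N) ℝ | ∀ i j, 0 ≤ P i j} ∩
      ({P | ∀ i, ∑ j, P i j = 1 / (N : ℝ)} ∩ {P | ∀ j, ∑ i, P i j = 1 / (N : ℝ)}) := by
    ext Q; simp [transportPolytope, Set.mem_inter_iff, and_assoc]
  rw [this]
  exact h1.inter (h2.inter h3)

lemma transportPolytope_isCompact (N : ℕ) : IsCompact (transportPolytope N) := by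
  have hsub : transportPolytope N ⊆
      Set.univ.pi fun _ : Fin N => Set.univ.pi fun _ : Fin N => Set.Icc (0:ℝ) (1 / N) := by
    intro Q hQ
    intro i _
    intro j _
    refine ⟨hQ.1 i j, ?_⟩
    calc Q i j ≤ ∑ k, Q i k :=
          Finset.single_le_sum (fun k _ => hQ.1 i k) (Finset.mem_univ j)
      _ = 1 / N := hQ.2.1 i
  exact IsCompact.of_isClosed_subset
    (isCompact_univ_pi fun _ => isCompact_univ_pi fun _ => isCompact_Icc)
    (transportPolytope_isClosed N) hsub

lemma continuous_matrixEntropy {N : ℕ} : Continuous (matrixEntropy (N := N)) := by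
  unfold matrixEntropy
  exact (continuous_finset_sum _ fun i _ => continuous_finset_sum _ fun j _ =>
    Real.continuous_mul_log.comp (continuous_elem' i j)).neg

/-- Convergence of the entropic plans to the unique unregularized minimizer. -/
lemma entropic_tendsto {N : ℕ} (C P : Matrix (Fin N) (Fin N) ℝ)
    (hP : P ∈ transportPolytope N)
    (hPmin : IsMinOn (fun Q => ∑ i, ∑ j, C i j * Q i j) (transportPolytope N) P)
    (hPunique : ∀ Q ∈ transportPolytope N,
      IsMinOn (fun Q => ∑ i, ∑ j, C i j * Q i j) (transportPolytope N) Q → Q = P)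
    (Pe : ℝ → Matrix (Fin N) (Fin N) ℝ)
    (hPe : ∀ ε : ℝ, 0 < ε → Pe ε ∈ transportPolytope N ∧
      IsMinOn (fun Q => ∑ i, ∑ j, C i j * Q i j - ε * matrixEntropy Q)
        (transportPolytope N) (Pe ε)) :
    Tendsto Pe (𝓝[>] (0:ℝ)) (𝓝 P) := by
  set f : Matrix (Fin N) (Fin N) ℝ → ℝ := fun Q => ∑ i, ∑ j, C i j * Q i j with hf
  have hfc : Continuous f :=
    continuous_finset_sum _ fun i _ => continuous_finset_sum _ fun j _ =>
      continuous_const.mul (continuous_elem' i j)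
  obtain ⟨M, hM⟩ := (transportPolytope_isCompact N).exists_bound_of_continuousOn
    (continuous_matrixEntropy.continuousOn)
  rw [Filter.tendsto_def]
  intro U hU
  obtain ⟨V, hVU, hVopen, hPV⟩ := mem_nhds_iff.mp hU
  have hK : IsCompact (transportPolytope N \ V) :=
    (transportPolytope_isCompact N).diff hVopen
  by_cases hne : (transportPolytope N \ V).Nonempty
  · obtain ⟨Q, hQK, hQmin⟩ := hK.exists_isMinOn hne hfc.continuousOn
    have hQpoly : Q ∈ transportPolytope N := hQK.1
    have hlt : f P < f Q := by
      rcases lt_or_ge (f P) (f Q) with h | h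
      · exact h
      · exfalso
        have : IsMinOn f (transportPolytope N) Q := by
          intro R hR
          exact le_trans h (hPmin hR)
        have := hPunique Q hQpoly this
        exact hQK.2 (this ▸ hPV)
    set δ := f Q - f P with hδ
    have hδpos : 0 < δ := sub_pos.mpr hlt
    have hMnn : (0:ℝ) ≤ M := le_trans (norm_nonneg _) (hM P hP)
    have hε₀pos : 0 < δ / (2 * M + 1) := by
      apply div_pos hδpos
      linarith
    filter_upwards [Ioo_mem_nhdsGT_of_mem (Set.mem_Ico.mpr ⟨le_refl 0, hε₀pos⟩)]
      with ε hε
    obtain ⟨hεpos, hεlt⟩ := hε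
    obtain ⟨hPePoly, hPeMin⟩ := hPe ε hεpos
    have key : f (Pe ε) < f P + δ := by
      have h1 : f (Pe ε) - ε * matrixEntropy (Pe ε) ≤ f P - ε * matrixEntropy P :=
        hPeMin hP
      have h2 : |matrixEntropy (Pe ε)| ≤ M := (Real.norm_eq_abs _) ▸ hM _ hPePoly
      have h3 : |matrixEntropy P| ≤ M := (Real.norm_eq_abs _) ▸ hM _ hP
      have h4 : f (Pe ε) ≤ f P + ε * (matrixEntropy (Pe ε) - matrixEntropy P) := by
        linarith
      have h5 : matrixEntropy (Pe ε) - matrixEntropy P ≤ 2 * M := by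
        have := abs_le.mp h2
        have := abs_le.mp h3
        linarith
      have h6 : ε * (matrixEntropy (Pe ε) - matrixEntropy P) ≤ ε * (2 * M) :=
        mul_le_mul_of_nonneg_left h5 hεpos.le
      have h7 : ε * (2 * M) < δ := by
        have : ε * (2 * M + 1) < δ := by
          have := (lt_div_iff₀ (by linarith)).mp hεlt
          linarith
        nlinarith
      linarith
    have hPeV : Pe ε ∈ V := by
      by_contra hno
      have hmem : Pe ε ∈ transportPolytope N \ V := ⟨hPePoly, hno⟩
      have : f Q ≤ f (Pe ε) := hQmin hmem
      simp only [hδ] at key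
      linarith
    exact Set.mem_preimage.mpr (hVU hPeV)
  · rw [Set.not_nonempty_iff_eq_empty, Set.diff_eq_empty] at hne
    filter_upwards [self_mem_nhdsWithin] with ε hε
    exact Set.mem_preimage.mpr (hVU (hne (hPe ε hε).1))

lemma continuousAt_softRanks {N d : ℕ} (h : Fin N → EuclideanSpace ℝ (Fin d))
    (P : Matrix (Fin N) (Fin N) ℝ) (hrow : ∀ i, (∑ k, P i k) ≠ 0) (i : Fin N) :
    ContinuousAt (fun Q : Matrix (Fin N) (Fin N) ℝ => softRanks Q h i) P := by
  unfold softRanks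
  refine tendsto_finset_sum _ fun j _ => ?_
  refine Tendsto.smul ?_ tendsto_const_nhds
  exact Tendsto.div (continuous_elem' i j).continuousAt
    (tendsto_finset_sum _ fun k _ => (continuous_elem' i k).continuousAt) (hrow i)

lemma continuousAt_comb {N d m n : ℕ} (h : Fin N → EuclideanSpace ℝ (Fin d))
    (P : Matrix (Fin N) (Fin N) ℝ) (hrow : ∀ i, (∑ k, P i k) ≠ 0)
    (a : Fin m → Fin N) (b : Fin n → Fin N) :
    ContinuousAt (fun Q : Matrix (Fin N) (Fin N) ℝ =>
      energyStat (fun i => softRanks Q h (a i)) (fun j => softRanks Q h (b j))) P := by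
  have hs : ∀ i : Fin N, ContinuousAt (fun Q : Matrix (Fin N) (Fin N) ℝ => softRanks Q h i) P :=
    continuousAt_softRanks h P hrow
  unfold energyStat
  refine ContinuousAt.sub (ContinuousAt.sub ?_ ?_) ?_ <;>
    refine continuousAt_const.mul (tendsto_finset_sum _ fun i _ =>
      tendsto_finset_sum _ fun j _ => Tendsto.norm (Tendsto.sub (hs _) (hs _)))

lemma softRanks_of_perm {N d : ℕ} (hN : 0 < N) (h : Fin N → EuclideanSpace ℝ (Fin d))
    (P : Matrix (Fin N) (Fin N) ℝ) (σ : Equiv.Perm (Fin N))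
    (hPperm : ∀ i j, P i j = if j = σ i then 1 / (N : ℝ) else 0) (i : Fin N) :
    softRanks P h i = h (σ i) := by
  have hne : (1 / (N : ℝ)) ≠ 0 := by
    have : (0:ℝ) < N := by exact_mod_cast hN
    positivity
  have hsum : (∑ k, P i k) = 1 / (N : ℝ) := by
    simp only [hPperm]
    rw [Finset.sum_ite_eq' Finset.univ (σ i) (fun _ => 1 / (N:ℝ))]
    simp
  unfold softRanks
  rw [hsum]
  have key : ∀ j : Fin N, ((P i j) / (1 / (N:ℝ))) • h j = if j = σ i then h j else 0 := by
    intro j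
    rw [hPperm]
    split <;> simp [div_self hne, one_div]
    · rw [inv_mul_cancel₀ (by exact_mod_cast hN.ne' : (N:ℝ) ≠ 0), one_smul]
  rw [Finset.sum_congr rfl fun j _ => key j]
  simp [Finset.sum_ite_eq' Finset.univ (σ i) h]

/-- The soft rank energy `sRE(ε)` converges to the rank energy `RE` as `ε → 0⁺`,
provided the unregularized discrete OT problem between the joint empirical measure
and the target measure has a unique optimal plan, which is a (scaled) permutation. -/
theorem soft_rank_energy_tendsto_rank_energy (d m n : ℕ) (hm : 0 < m) (hn : 0 < n)
    (X : Fin m → EuclideanSpace ℝ (Fin d)) (Y : Fin n → EuclideanSpace ℝ (Fin d))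
    (h : Fin (m + n) → EuclideanSpace ℝ (Fin d))
    (hcube : ∀ j, ∀ l, h j l ∈ Set.Icc (0:ℝ) 1)
    -- the cost matrix between the pooled samples and the target points
    (C : Matrix (Fin (m + n)) (Fin (m + n)) ℝ)
    (hC : ∀ i j, C i j = ‖Fin.append X Y i - h j‖ ^ 2)
    -- the optimal unregularized plan, assumed unique and a scaled permutation
    (P : Matrix (Fin (m + n)) (Fin (m + n)) ℝ) (σ : Equiv.Perm (Fin (m + n)))
    (hP : P ∈ transportPolytope (m + n))
    (hPmin : IsMinOn (fun Q => ∑ i, ∑ j, C i j * Q i j) (transportPolytope (m + n)) P)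
    (hPunique : ∀ Q ∈ transportPolytope (m + n),
      IsMinOn (fun Q => ∑ i, ∑ j, C i j * Q i j) (transportPolytope (m + n)) Q → Q = P)
    (hPperm : ∀ i j, P i j = if j = σ i then 1 / ((m + n : ℕ) : ℝ) else 0)
    -- the entropic plans
    (Pe : ℝ → Matrix (Fin (m + n)) (Fin (m + n)) ℝ)
    (hPe : ∀ ε : ℝ, 0 < ε → Pe ε ∈ transportPolytope (m + n) ∧
      IsMinOn (fun Q => ∑ i, ∑ j, C i j * Q i j - ε * matrixEntropy Q)
        (transportPolytope (m + n)) (Pe ε)) :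
    Tendsto
      (fun ε =>
        energyStat (fun i : Fin m => softRanks (Pe ε) h (Fin.castAdd n i))
          (fun j : Fin n => softRanks (Pe ε) h (Fin.natAdd m j)))
      (𝓝[>] (0:ℝ))
      (𝓝 (energyStat (fun i : Fin m => h (σ (Fin.castAdd n i)))
        (fun j : Fin n => h (σ (Fin.natAdd m j))))) := by
  have hN : 0 < m + n := Nat.add_pos_left hm n
  have hNne : (1 / ((m + n : ℕ) : ℝ)) ≠ 0 := by
    have : (0:ℝ) < (m + n : ℕ) := by exact_mod_cast hN
    positivity
  have hrow : ∀ i, (∑ k, P i k) ≠ 0 := by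
    intro i
    rw [hP.2.1 i]
    exact hNne
  have hT : Tendsto Pe (𝓝[>] (0:ℝ)) (𝓝 P) :=
    entropic_tendsto C P hP hPmin hPunique Pe hPe
  have hG := continuousAt_comb h P hrow (fun i : Fin m => Fin.castAdd n i)
    (fun j : Fin n => Fin.natAdd m j)
  have hcomp := hG.tendsto.comp hT
  have hsrP : ∀ i, softRanks P h i = h (σ i) :=
    softRanks_of_perm hN h P σ hPperm
  have hGPeq :
      energyStat (fun i : Fin m => softRanks P h (Fin.castAdd n i))
        (fun j : Fin n => softRanks P h (Fin.natAdd m j)) =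
      energyStat (fun i : Fin m => h (σ (Fin.castAdd n i)))
        (fun j : Fin n => h (σ (Fin.natAdd m j))) := by
    congr 1 <;> funext x <;> exact hsrP _
  rw [← hGPeq]
  exact hcomp
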